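/- Let T be a finite tree with at least two distinct designated leaves u_0 and u_L, let u_1, …, u_{L−1} denote the remaining leaves, let q ≥ 1, and let S_a, S_b : {1,…,q} → Bool. Define an undirected graph H as follows: take all edges of T; add, for each i ∈ {1,…,q}, fresh vertices v^i_0, v^i_1, …, v^i_L with edges {v^i_j, v^i_{j+1}} for 0 ≤ j < L; add the edge {u_0, v^i_0} if and only if S_a(i) = true; and add the edge {u_L, v^i_L} if and only if S_b(i) = true. Then H contains a cycle if and only if there exists an index i with S_a(i) = true and S_b(i) = true. -/

import Mathlib

/-- Generating relation of the undirected lower-bound gadget `H`: all edges of the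
tree `T`, the path edges `{v^i_j, v^i_{j+1}}` for `0 ≤ j < L`, the edge
`{u 0, v^i_0}` iff `Sa i = true`, and the edge `{u L, v^i_L}` iff `Sb i = true`. -/
def undirGadgetRel {A : Type*} (T : SimpleGraph A) (L q : ℕ)
    (u : Fin (L + 1) → A) (Sa Sb : Fin q → Bool) :
    (A ⊕ (Fin q × Fin (L + 1))) → (A ⊕ (Fin q × Fin (L + 1))) → Prop
  | .inl a, .inl b => T.Adj a b
  | .inl a, .inr (i, j) =>
      (a = u 0 ∧ (j : ℕ) = 0 ∧ Sa i = true) ∨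
        (a = u (Fin.last L) ∧ (j : ℕ) = L ∧ Sb i = true)
  | .inr (i, j), .inr (i', j') => i = i' ∧ (j' : ℕ) = (j : ℕ) + 1
  | .inr _, .inl _ => False

open SimpleGraph Walk in
/-- In a cycle, any vertex of the support has two distinct neighbors lying on the cycle. -/
private lemma cycle_two_neighbors' {V : Type*} {G : SimpleGraph V} {v w : V} {c : G.Walk v v}
    (hc : c.IsCycle) (hw : w ∈ c.support) :
    ∃ x y, x ≠ y ∧ G.Adj w x ∧ G.Adj w y ∧ x ∈ c.support ∧ y ∈ c.support := by
  classical
  have hc' : (c.rotate w hw).IsCycle := hc.rotate hw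
  have htail : ∀ z, z ∈ (c.rotate w hw).support.tail → z ∈ c.support := fun z hz =>
    List.mem_of_mem_tail ((SimpleGraph.Walk.support_rotate c w hw).perm.mem_iff.mp hz)
  obtain ⟨x, h1, p, hp⟩ := SimpleGraph.Walk.not_nil_iff.mp hc'.not_nil
  rw [hp] at hc'
  obtain ⟨hpath, hedge⟩ := (SimpleGraph.Walk.cons_isCycle_iff p h1).mp hc'
  have hlen : 2 ≤ p.length := by
    have h3 := hc'.three_le_length
    simp only [SimpleGraph.Walk.length_cons] at h3
    omega
  have hrevnil : ¬ p.reverse.Nil := by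
    rw [SimpleGraph.Walk.not_nil_iff_lt_length, SimpleGraph.Walk.length_reverse]; omega
  obtain ⟨y, h2, qq, hq⟩ := SimpleGraph.Walk.not_nil_iff.mp hrevnil
  have htailp : (c.rotate w hw).support.tail = p.support := by
    rw [hp, SimpleGraph.Walk.support_cons, List.tail_cons]
  refine ⟨x, y, ?_, h1, h2, ?_, ?_⟩
  · rintro rfl
    have hrp : p.reverse.IsPath := hpath.reverse
    rw [hq, SimpleGraph.Walk.cons_isPath_iff] at hrp
    obtain ⟨hqp, hwq⟩ := hrp
    by_cases hnil : qq.Nil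
    · have h1' : p.reverse.length = 1 := by
        rw [hq, SimpleGraph.Walk.length_cons, SimpleGraph.Walk.nil_iff_length_eq.mp hnil]
      rw [SimpleGraph.Walk.length_reverse] at h1'
      omega
    · obtain ⟨z', h3, q3, hq3⟩ := SimpleGraph.Walk.not_nil_iff.mp hnil
      rw [hq3, SimpleGraph.Walk.cons_isPath_iff] at hqp
      exact hqp.2 q3.end_mem_support
  · exact htail _ (htailp ▸ p.start_mem_support)
  · refine htail _ (htailp ▸ ?_)
    have hy : y ∈ p.reverse.support := by
      rw [hq, SimpleGraph.Walk.support_cons]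
      exact List.mem_cons_of_mem _ qq.start_mem_support
    rwa [SimpleGraph.Walk.support_reverse, List.mem_reverse] at hy

private lemma uniq_contra' {V : Type*} {G : SimpleGraph V} {v w : V} {c : G.Walk v v}
    (hc : c.IsCycle) (hmem : w ∈ c.support) (t : V)
    (huniq : ∀ z, G.Adj w z → z ∈ c.support → z = t) : False := by
  obtain ⟨x, y, hxy, hax, hay, hxs, hys⟩ := cycle_two_neighbors' hc hmem
  exact hxy ((huniq x hax hxs).trans (huniq y hay hys).symm)

/-- Classification of the neighbors of a path vertex `v^i_j` in the gadget graph. -/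
private lemma gadget_adj_inr {A : Type*} (T : SimpleGraph A) (L q : ℕ)
    (u : Fin (L + 1) → A) (Sa Sb : Fin q → Bool) {i : Fin q} {j : Fin (L + 1)}
    {x : A ⊕ (Fin q × Fin (L + 1))}
    (h : (SimpleGraph.fromRel (undirGadgetRel T L q u Sa Sb)).Adj (Sum.inr (i, j)) x) :
    (∃ j' : Fin (L + 1), (j' : ℕ) = (j : ℕ) + 1 ∧ x = Sum.inr (i, j')) ∨
    (∃ j' : Fin (L + 1), (j : ℕ) = (j' : ℕ) + 1 ∧ x = Sum.inr (i, j')) ∨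
    (x = Sum.inl (u 0) ∧ (j : ℕ) = 0 ∧ Sa i = true) ∨
    (x = Sum.inl (u (Fin.last L)) ∧ (j : ℕ) = L ∧ Sb i = true) := by
  obtain ⟨hne, h | h⟩ := h
  · cases x with
    | inl a => exact h.elim
    | inr pr =>
      obtain ⟨i', j'⟩ := pr
      obtain ⟨rfl, hj⟩ := h
      exact Or.inl ⟨j', hj, rfl⟩
  · cases x with
    | inl a =>
      rcases h with ⟨rfl, hj, hs⟩ | ⟨rfl, hj, hs⟩
      · exact Or.inr (Or.inr (Or.inl ⟨rfl, hj, hs⟩))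
      · exact Or.inr (Or.inr (Or.inr ⟨rfl, hj, hs⟩))
    | inr pr =>
      obtain ⟨i', j'⟩ := pr
      obtain ⟨rfl, hj⟩ := h
      exact Or.inr (Or.inl ⟨j', hj, rfl⟩)

/-- The embedding of the tree `T` into the gadget graph. -/
private def gadgetHomInl {A : Type*} (T : SimpleGraph A) (L q : ℕ)
    (u : Fin (L + 1) → A) (Sa Sb : Fin q → Bool) :
    T →g SimpleGraph.fromRel (undirGadgetRel T L q u Sa Sb) where
  toFun := Sum.inl
  map_rel' := fun {a b} h =>
    ⟨fun he => h.ne (Sum.inl_injective he), Or.inl h⟩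

/-- A walk in the gadget graph whose support is contained in the tree part lifts to `T`. -/
private lemma gadget_lift {A : Type*} (T : SimpleGraph A) (L q : ℕ)
    (u : Fin (L + 1) → A) (Sa Sb : Fin q → Bool) :
    ∀ {x y : A ⊕ (Fin q × Fin (L + 1))}
      (p : (SimpleGraph.fromRel (undirGadgetRel T L q u Sa Sb)).Walk x y),
      (∀ z ∈ p.support, ∃ a, z = Sum.inl a) → ∀ (a b : A) (hx : x = Sum.inl a)
      (hy : y = Sum.inl b),
      ∃ qT : T.Walk a b, qT.map (gadgetHomInl T L q u Sa Sb) = p.copy hx hy := by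
  intro x y p
  induction p with
  | nil =>
    intro hsup a b hx hy
    subst hx
    obtain rfl : a = b := Sum.inl_injective hy
    exact ⟨SimpleGraph.Walk.nil, rfl⟩
  | @cons xx yy zz h p' ih =>
    intro hsup a b hx hy
    subst hx; subst hy
    obtain ⟨a', rfl⟩ := hsup yy
      (by simp [SimpleGraph.Walk.support_cons])
    have hTadj : T.Adj a a' := by
      obtain ⟨hne, hr | hr⟩ := h
      · exact hr
      · exact hr.symm
    obtain ⟨qT', hq'⟩ := ih
      (fun z hz => hsup z (by simp [SimpleGraph.Walk.support_cons, hz])) a' b rfl rfl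
    refine ⟨SimpleGraph.Walk.cons hTadj qT', ?_⟩
    rw [SimpleGraph.Walk.map_cons, hq']
    rfl

/-- For a finite tree `T` whose leaves (degree-one vertices) are exactly
`u 0, u 1, …, u L`, the undirected gadget graph `H` contains a cycle if and only if
there is an index `i` with `Sa i = true` and `Sb i = true`. -/
theorem undirGadget_has_cycle_iff_intersect
    {A : Type*} [Fintype A] (T : SimpleGraph A) (hT : T.IsTree)
    (L q : ℕ) (hL : 1 ≤ L) (hq : 1 ≤ q)
    (u : Fin (L + 1) → A) (hinj : Function.Injective u)
    (hleaf : ∀ j : Fin (L + 1), ∃! b : A, T.Adj (u j) b)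
    (hall : ∀ a : A, (∃! b : A, T.Adj a b) → ∃ j, u j = a)
    (Sa Sb : Fin q → Bool) :
    (∃ (v : A ⊕ (Fin q × Fin (L + 1)))
        (c : (SimpleGraph.fromRel (undirGadgetRel T L q u Sa Sb)).Walk v v), c.IsCycle) ↔
      ∃ i : Fin q, Sa i = true ∧ Sb i = true := by
  set H := SimpleGraph.fromRel (undirGadgetRel T L q u Sa Sb) with hH
  constructor
  · rintro ⟨v, c, hc⟩
    by_contra hno
    -- no path vertex can lie on the cycle
    have key : ∀ (ii : Fin q) (j : Fin (L + 1)), Sum.inr (ii, j) ∉ c.support := by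
      intro ii j
      cases hSb : Sb ii with
      | false =>
        have down : ∀ m : ℕ, ∀ j : Fin (L + 1), L ≤ (j : ℕ) + m →
            Sum.inr (ii, j) ∉ c.support := by
          intro m
          induction m with
          | zero =>
            intro j hj hmem
            refine uniq_contra' hc hmem (Sum.inr (ii, ⟨L - 1, by omega⟩)) ?_
            intro z hz hzs
            rcases gadget_adj_inr T L q u Sa Sb hz with
              ⟨j', hj', rfl⟩ | ⟨j', hj', rfl⟩ | ⟨rfl, hj0, _⟩ | ⟨_, _, hsb⟩
            · exact absurd hj' (by have := j'.isLt; have := j.isLt; omega)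
            · have hje : j' = ⟨L - 1, by omega⟩ :=
                Fin.ext (show (j' : ℕ) = L - 1 by have := j.isLt; omega)
              rw [hje]
            · exact absurd hj0 (by omega)
            · simp [hSb] at hsb
          | succ m ih =>
            intro j hj
            by_cases hLe : L ≤ (j : ℕ) + m
            · exact ih j hLe
            intro hmem
            rcases Nat.eq_zero_or_pos (j : ℕ) with hj0 | hjpos
            · refine uniq_contra' hc hmem (Sum.inl (u 0)) ?_
              intro z hz hzs
              rcases gadget_adj_inr T L q u Sa Sb hz with
                ⟨j', hj', rfl⟩ | ⟨j', hj', rfl⟩ | ⟨rfl, _, _⟩ | ⟨_, hjL, _⟩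
              · exact absurd hzs (ih j' (by omega))
              · exact absurd hj' (by omega)
              · rfl
              · exact absurd hjL (by omega)
            · refine uniq_contra' hc hmem (Sum.inr (ii, ⟨(j : ℕ) - 1, by have := j.isLt; omega⟩)) ?_
              intro z hz hzs
              rcases gadget_adj_inr T L q u Sa Sb hz with
                ⟨j', hj', rfl⟩ | ⟨j', hj', rfl⟩ | ⟨rfl, hj0, _⟩ | ⟨_, hjL, _⟩
              · exact absurd hzs (ih j' (by omega))
              · have hje : j' = ⟨(j : ℕ) - 1, by have := j.isLt; omega⟩ :=
                  Fin.ext (show (j' : ℕ) = (j : ℕ) - 1 by omega)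
                rw [hje]
              · exact absurd hj0 (by omega)
              · exact absurd hjL (by omega)
        exact down L j (by have := j.isLt; omega)
      | true =>
        have hSa : Sa ii = false := by
          cases hSa2 : Sa ii with
          | false => rfl
          | true => exact absurd ⟨ii, hSa2, hSb⟩ hno
        have up : ∀ m : ℕ, ∀ j : Fin (L + 1), (j : ℕ) ≤ m →
            Sum.inr (ii, j) ∉ c.support := by
          intro m
          induction m with
          | zero =>
            intro j hj hmem
            refine uniq_contra' hc hmem (Sum.inr (ii, ⟨1, by omega⟩)) ?_
            intro z hz hzs
            rcases gadget_adj_inr T L q u Sa Sb hz with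
              ⟨j', hj', rfl⟩ | ⟨j', hj', rfl⟩ | ⟨_, _, hsa⟩ | ⟨_, hjL, _⟩
            · have hje : j' = ⟨1, by omega⟩ := Fin.ext (show (j' : ℕ) = 1 by omega)
              rw [hje]
            · exact absurd hj' (by omega)
            · simp [hSa] at hsa
            · exact absurd hjL (by omega)
          | succ m ih =>
            intro j hj
            by_cases hLe : (j : ℕ) ≤ m
            · exact ih j hLe
            intro hmem
            by_cases hjL : (j : ℕ) = L
            · refine uniq_contra' hc hmem (Sum.inl (u (Fin.last L))) ?_
              intro z hz hzs
              rcases gadget_adj_inr T L q u Sa Sb hz with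
                ⟨j', hj', rfl⟩ | ⟨j', hj', rfl⟩ | ⟨_, hj0, _⟩ | ⟨rfl, _, _⟩
              · exact absurd hj' (by have := j'.isLt; omega)
              · exact absurd hzs (ih j' (by omega))
              · exact absurd hj0 (by omega)
              · rfl
            · refine uniq_contra' hc hmem
                (Sum.inr (ii, ⟨(j : ℕ) + 1, by have := j.isLt; omega⟩)) ?_
              intro z hz hzs
              rcases gadget_adj_inr T L q u Sa Sb hz with
                ⟨j', hj', rfl⟩ | ⟨j', hj', rfl⟩ | ⟨_, hj0, _⟩ | ⟨_, hjl2, _⟩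
              · have hje : j' = ⟨(j : ℕ) + 1, by have := j.isLt; omega⟩ :=
                  Fin.ext (show (j' : ℕ) = (j : ℕ) + 1 by omega)
                rw [hje]
              · exact absurd hzs (ih j' (by omega))
              · exact absurd hj0 (by omega)
              · exact absurd hjl2 hjL
        exact up L j (by have := j.isLt; omega)
    have hsup : ∀ z ∈ c.support, ∃ a, z = Sum.inl a := by
      intro z hz
      cases z with
      | inl a => exact ⟨a, rfl⟩
      | inr pr =>
        obtain ⟨i, j⟩ := pr
        exact absurd hz (key i j)
    obtain ⟨a₀, rfl⟩ := hsup v c.start_mem_support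
    obtain ⟨qT, hqT⟩ := gadget_lift T L q u Sa Sb c hsup a₀ a₀ rfl rfl
    rw [SimpleGraph.Walk.copy_rfl_rfl] at hqT
    have hInj : Function.Injective (gadgetHomInl T L q u Sa Sb) :=
      fun _ _ h => Sum.inl_injective h
    have hcyc : qT.IsCycle :=
      (SimpleGraph.Walk.map_isCycle_iff_of_injective hInj).mp (by rw [hqT]; exact hc)
    exact hT.IsAcyclic qT hcyc
  · rintro ⟨i, hSa, hSb⟩
    classical
    -- the ascending path along the `i`-th gadget path
    have hP1 : ∀ n : ℕ, n ≤ L → ∀ jf : Fin (L + 1), (jf : ℕ) = n →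
        ∃ w : H.Walk (Sum.inr (i, 0)) (Sum.inr (i, jf)),
          (∀ z ∈ w.support, ∃ k : Fin (L + 1), (k : ℕ) ≤ n ∧ z = Sum.inr (i, k)) ∧
          w.support.Nodup := by
      intro n
      induction n with
      | zero =>
        intro _ jf hjf
        have hjf0 : jf = 0 := Fin.ext (by simpa using hjf)
        subst hjf0
        refine ⟨SimpleGraph.Walk.nil, ?_, by simp⟩
        intro z hz
        rw [SimpleGraph.Walk.support_nil, List.mem_singleton] at hz
        exact ⟨0, by simp, hz⟩
      | succ n ih =>
        intro hn jf hjf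
        obtain ⟨w, hws, hwn⟩ := ih (by omega) ⟨n, by omega⟩ rfl
        have hadj : H.Adj (Sum.inr (i, ⟨n, by omega⟩)) (Sum.inr (i, jf)) := by
          refine ⟨?_, Or.inl ⟨rfl, hjf⟩⟩
          intro hh
          rw [Sum.inr.injEq, Prod.mk.injEq] at hh
          have hv : (jf : ℕ) = n := by rw [← hh.2]
          omega
        refine ⟨w.concat hadj, ?_, ?_⟩
        · intro z hz
          rw [SimpleGraph.Walk.support_concat,
            List.mem_append, List.mem_singleton] at hz
          rcases hz with hz | rfl
          · obtain ⟨k, hk, rfl⟩ := hws z hz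
            exact ⟨k, by omega, rfl⟩
          · exact ⟨jf, by omega, rfl⟩
        · rw [SimpleGraph.Walk.support_concat]
          refine List.Nodup.append hwn (List.nodup_singleton _) ?_
          intro a ha hb
          rw [List.mem_singleton] at hb
          subst hb
          obtain ⟨k, hk, hkeq⟩ := hws _ ha
          rw [Sum.inr.injEq, Prod.mk.injEq] at hkeq
          have : (jf : ℕ) = (k : ℕ) := by rw [hkeq.2]
          omega
    obtain ⟨P1, hP1s, hP1n⟩ := hP1 L le_rfl (Fin.last L) (by simp)
    -- the tree path from `u L` back to `u 0`
    obtain ⟨p0⟩ := hT.isConnected.preconnected (u (Fin.last L)) (u 0)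
    set tq : T.Walk (u (Fin.last L)) (u 0) := (p0.toPath : T.Path _ _).val with htqdef
    have htq : tq.IsPath := (p0.toPath).property
    set tp : H.Walk (Sum.inl (u (Fin.last L))) (Sum.inl (u 0)) := tq.map (gadgetHomInl T L q u Sa Sb) with htpdef
    have htps : tp.support = tq.support.map (gadgetHomInl T L q u Sa Sb) :=
      SimpleGraph.Walk.support_map _ _
    have hadjL : H.Adj (Sum.inr (i, Fin.last L)) (Sum.inl (u (Fin.last L))) := by
      refine ⟨by simp, Or.inr (Or.inr ⟨rfl, by simp, hSb⟩)⟩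
    have hadj0 : H.Adj (Sum.inl (u 0)) (Sum.inr (i, (0 : Fin (L + 1)))) := by
      refine ⟨by simp, Or.inl (Or.inl ⟨rfl, by simp, hSa⟩)⟩
    set P : H.Walk (Sum.inr (i, 0)) (Sum.inl (u 0)) :=
      P1.append (SimpleGraph.Walk.cons hadjL tp) with hPdef
    refine ⟨Sum.inl (u 0), SimpleGraph.Walk.cons hadj0 P, ?_⟩
    rw [SimpleGraph.Walk.cons_isCycle_iff]
    have hPsup : P.support = P1.support ++ tp.support := by
      rw [hPdef, SimpleGraph.Walk.support_append, SimpleGraph.Walk.support_cons,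
        List.tail_cons]
    constructor
    · rw [SimpleGraph.Walk.isPath_def, hPsup]
      refine List.Nodup.append hP1n ?_ ?_
      · rw [htps]
        exact ((SimpleGraph.Walk.isPath_def _).mp htq).map
          (fun _ _ h => Sum.inl_injective h)
      · intro a ha hb
        obtain ⟨k, _, rfl⟩ := hP1s a ha
        rw [htps, List.mem_map] at hb
        obtain ⟨b', _, hb'⟩ := hb
        exact Sum.inl_ne_inr hb'
    · intro hmem
      rw [hPdef, SimpleGraph.Walk.edges_append, SimpleGraph.Walk.edges_cons,
        List.mem_append, List.mem_cons] at hmem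
      rcases hmem with hmem | hmem | hmem
      · have := P1.fst_mem_support_of_mem_edges hmem
        obtain ⟨k, _, hk⟩ := hP1s _ this
        exact Sum.inl_ne_inr hk
      · rw [Sym2.eq_iff] at hmem
        rcases hmem with ⟨h1, _⟩ | ⟨_, h2⟩
        · exact Sum.inl_ne_inr h1
        · rw [Sum.inr.injEq, Prod.mk.injEq] at h2
          have : ((0 : Fin (L + 1)) : ℕ) = ((Fin.last L : Fin (L + 1)) : ℕ) := by rw [h2.2]
          simp at this
          omega
      · have := tp.snd_mem_support_of_mem_edges hmem
        rw [htps, List.mem_map] at this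
        obtain ⟨b', _, hb'⟩ := this
        exact Sum.inl_ne_inr hb'
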